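/- arXiv:1906.01404 — 2 statements merged into one kernel-verified Lean document; each statement's English description precedes it below -/
import Mathlib

section
/- Let (B_N)_{N≥1} be a sequence of random variables where B_N is binomially distributed with parameters N and p_N, and suppose there exist c, ε > 0 with N p_N ≥ c N^{ε} for all N. Then B_N / (N p_N) → 1 almost surely, and in particular B_N → ∞ almost surely. -/
open MeasureTheory Filter

lemma aux_binom_sum (N : ℕ) (pN x : ℝ) :
    ∑ m ∈ Finset.range (N+1), x ^ m * ((N.choose m : ℝ) * pN ^ m * (1 - pN) ^ (N - m))
      = (x * pN + (1 - pN)) ^ N := by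
  rw [add_pow]
  exact Finset.sum_congr rfl fun m hm => by ring

lemma aux_measure_mem {Ω : Type*} [MeasurableSpace Ω] (μ : Measure Ω) (X : Ω → ℕ)
    (hX : Measurable X) (S : Set ℕ) :
    μ {ω | X ω ∈ S} = ∑' m : S, μ {ω | X ω = (m : ℕ)} := by
  have h1 : {ω | X ω ∈ S} = ⋃ m ∈ S, X ⁻¹' {m} := by ext ω; simp
  rw [h1, measure_biUnion S.to_countable]
  · rfl
  · intro m _ n _ hmn
    apply Set.disjoint_left.2
    intro ω h1 h2
    exact hmn (by simp at h1 h2; rw [← h1, h2])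
  · exact fun m _ => hX (measurableSet_singleton m)

lemma aux_markov {Ω : Type*} [MeasurableSpace Ω] (μ : Measure Ω) (X : Ω → ℕ)
    (hX : Measurable X) (N : ℕ) (pN : ℝ) (hp0 : 0 ≤ pN) (hp1 : pN ≤ 1)
    (hlaw : ∀ m : ℕ, μ {ω | X ω = m}
      = ENNReal.ofReal ((N.choose m : ℝ) * pN ^ m * (1 - pN) ^ (N - m)))
    (S : Set ℕ) (f : ℕ → ℝ) (hf0 : ∀ m, 0 ≤ f m) (hfS : ∀ m ∈ S, 1 ≤ f m) :
    μ {ω | X ω ∈ S} ≤ ENNReal.ofReal (∑ m ∈ Finset.range (N+1),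
      f m * ((N.choose m : ℝ) * pN ^ m * (1 - pN) ^ (N - m))) := by
  set g : ℕ → ℝ := fun m => (N.choose m : ℝ) * pN ^ m * (1 - pN) ^ (N - m) with hg
  have hg0 : ∀ m, 0 ≤ g m := fun m => by
    have h1 : (0:ℝ) ≤ 1 - pN := by linarith
    positivity
  have hfg0 : ∀ m, 0 ≤ f m * g m := fun m => mul_nonneg (hf0 m) (hg0 m)
  calc μ {ω | X ω ∈ S} = ∑' m : S, μ {ω | X ω = (m : ℕ)} := aux_measure_mem μ X hX S
    _ = ∑' m : S, ENNReal.ofReal (g m) := by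
        exact tsum_congr fun m => hlaw m
    _ = ∑' m : ℕ, Set.indicator S (fun m => ENNReal.ofReal (g m)) m := by
        exact tsum_subtype S (fun m => ENNReal.ofReal (g m))
    _ ≤ ∑' m : ℕ, ENNReal.ofReal (f m * g m) := by
        refine ENNReal.tsum_le_tsum fun m => ?_
        by_cases hm : m ∈ S
        · rw [Set.indicator_of_mem hm]
          exact ENNReal.ofReal_le_ofReal (le_mul_of_one_le_left (hg0 m) (hfS m hm))
        · rw [Set.indicator_of_notMem hm]; exact zero_le
    _ = ∑ m ∈ Finset.range (N+1), ENNReal.ofReal (f m * g m) := by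
        refine tsum_eq_sum fun m hm => ?_
        have hmN : N < m := by simpa using Finset.mem_range.not.mp hm
        have : N.choose m = 0 := Nat.choose_eq_zero_of_lt hmN
        simp [hg, this]
    _ = ENNReal.ofReal (∑ m ∈ Finset.range (N+1), f m * g m) := by
        rw [ENNReal.ofReal_sum_of_nonneg fun m _ => hfg0 m]

lemma aux_base_pow_le (N : ℕ) (pN x : ℝ) (hp0 : 0 ≤ pN) (hp1 : pN ≤ 1) (hx : 0 ≤ x) :
    (x * pN + (1 - pN)) ^ N ≤ Real.exp ((N : ℝ) * (pN * (x - 1))) := by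
  have h1 : x * pN + (1 - pN) ≤ Real.exp (pN * (x - 1)) := by
    have h2 := Real.add_one_le_exp (pN * (x - 1))
    nlinarith
  have h0 : (0:ℝ) ≤ x * pN + (1 - pN) := by nlinarith
  calc (x * pN + (1-pN))^N ≤ (Real.exp (pN*(x-1)))^N := pow_le_pow_left₀ h0 h1 N
    _ = Real.exp ((N:ℝ) * (pN*(x-1))) := by
        rw [← Real.exp_nat_mul]

lemma aux_exp_quad {t : ℝ} (h0 : 0 ≤ t) (h1 : t ≤ 1) :
    Real.exp t ≤ 1 + t + (3/4) * t^2 := by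
  have h := Real.exp_bound (n := 2) (x := t) (by rw [abs_of_nonneg h0]; exact h1) (by norm_num)
  rw [abs_of_nonneg h0] at h
  have h2 := (abs_sub_le_iff.1 h).1
  simp [Finset.sum_range_succ, Nat.factorial] at h2 ⊢
  nlinarith

lemma aux_exp_quad_neg {t : ℝ} (h0 : 0 ≤ t) (h1 : t ≤ 1) :
    Real.exp (-t) ≤ 1 - t + (3/4) * t^2 := by
  have h := Real.exp_bound (n := 2) (x := -t) (by rw [abs_neg, abs_of_nonneg h0]; exact h1) (by norm_num)
  rw [abs_neg, abs_of_nonneg h0] at h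
  have h2 := (abs_sub_le_iff.1 h).1
  simp [Finset.sum_range_succ, Nat.factorial] at h2 ⊢
  nlinarith

lemma aux_upper_tail {Ω : Type*} [MeasurableSpace Ω] (μ : Measure Ω) (X : Ω → ℕ)
    (hX : Measurable X) (N : ℕ) (pN : ℝ) (hp0 : 0 ≤ pN) (hp1 : pN ≤ 1)
    (hlaw : ∀ m : ℕ, μ {ω | X ω = m}
      = ENNReal.ofReal ((N.choose m : ℝ) * pN ^ m * (1 - pN) ^ (N - m)))
    (t a : ℝ) (ht : 0 ≤ t) :
    μ {ω | a ≤ (X ω : ℝ)} ≤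
      ENNReal.ofReal (Real.exp ((N:ℝ) * (pN * (Real.exp t - 1)) - t * a)) := by
  set g : ℕ → ℝ := fun m => (N.choose m : ℝ) * pN ^ m * (1 - pN) ^ (N - m) with hg
  have hm := aux_markov μ X hX N pN hp0 hp1 hlaw {m : ℕ | a ≤ (m:ℝ)}
    (fun m => Real.exp (t * m - t * a)) (fun m => (Real.exp_pos _).le)
    (fun m hm => Real.one_le_exp (by
      have : t * a ≤ t * m := mul_le_mul_of_nonneg_left hm ht
      linarith))
  refine le_trans (le_of_eq (by rfl)) (le_trans hm (ENNReal.ofReal_le_ofReal ?_))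
  have hstep : ∀ m ∈ Finset.range (N+1),
      Real.exp (t * m - t * a) * g m = Real.exp (-(t*a)) * (Real.exp t ^ m * g m) := by
    intro m _
    rw [← Real.exp_nat_mul]
    conv_rhs => rw [← mul_assoc, ← Real.exp_add]
    ring_nf
  calc ∑ m ∈ Finset.range (N+1), Real.exp (t * m - t * a) * g m
      = Real.exp (-(t*a)) * ∑ m ∈ Finset.range (N+1), Real.exp t ^ m * g m := by
        rw [Finset.mul_sum]; exact Finset.sum_congr rfl hstep
    _ = Real.exp (-(t*a)) * (Real.exp t * pN + (1 - pN)) ^ N := by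
        rw [aux_binom_sum]
    _ ≤ Real.exp (-(t*a)) * Real.exp ((N:ℝ) * (pN * (Real.exp t - 1))) := by
        exact mul_le_mul_of_nonneg_left
          (aux_base_pow_le N pN _ hp0 hp1 (Real.exp_pos t).le) (Real.exp_pos _).le
    _ = Real.exp ((N:ℝ) * (pN * (Real.exp t - 1)) - t * a) := by
        rw [← Real.exp_add]; ring_nf

lemma aux_lower_tail {Ω : Type*} [MeasurableSpace Ω] (μ : Measure Ω) (X : Ω → ℕ)
    (hX : Measurable X) (N : ℕ) (pN : ℝ) (hp0 : 0 ≤ pN) (hp1 : pN ≤ 1)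
    (hlaw : ∀ m : ℕ, μ {ω | X ω = m}
      = ENNReal.ofReal ((N.choose m : ℝ) * pN ^ m * (1 - pN) ^ (N - m)))
    (t a : ℝ) (ht : 0 ≤ t) :
    μ {ω | (X ω : ℝ) ≤ a} ≤
      ENNReal.ofReal (Real.exp ((N:ℝ) * (pN * (Real.exp (-t) - 1)) + t * a)) := by
  set g : ℕ → ℝ := fun m => (N.choose m : ℝ) * pN ^ m * (1 - pN) ^ (N - m) with hg
  have hm := aux_markov μ X hX N pN hp0 hp1 hlaw {m : ℕ | (m:ℝ) ≤ a}
    (fun m => Real.exp (t * a - t * m)) (fun m => (Real.exp_pos _).le)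
    (fun m hm => Real.one_le_exp (by
      have : t * m ≤ t * a := mul_le_mul_of_nonneg_left hm ht
      linarith))
  refine le_trans (le_of_eq (by rfl)) (le_trans hm (ENNReal.ofReal_le_ofReal ?_))
  have hstep : ∀ m ∈ Finset.range (N+1),
      Real.exp (t * a - t * m) * g m = Real.exp (t*a) * (Real.exp (-t) ^ m * g m) := by
    intro m _
    rw [← Real.exp_nat_mul]
    conv_rhs => rw [← mul_assoc, ← Real.exp_add]
    ring_nf
  calc ∑ m ∈ Finset.range (N+1), Real.exp (t * a - t * m) * g m
      = Real.exp (t*a) * ∑ m ∈ Finset.range (N+1), Real.exp (-t) ^ m * g m := by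
        rw [Finset.mul_sum]; exact Finset.sum_congr rfl hstep
    _ = Real.exp (t*a) * (Real.exp (-t) * pN + (1 - pN)) ^ N := by
        rw [aux_binom_sum]
    _ ≤ Real.exp (t*a) * Real.exp ((N:ℝ) * (pN * (Real.exp (-t) - 1))) := by
        exact mul_le_mul_of_nonneg_left
          (aux_base_pow_le N pN _ hp0 hp1 (Real.exp_pos _).le) (Real.exp_pos _).le
    _ = Real.exp ((N:ℝ) * (pN * (Real.exp (-t) - 1)) + t * a) := by
        rw [← Real.exp_add]; ring_nf

lemma aux_chernoff {Ω : Type*} [MeasurableSpace Ω] (μ : Measure Ω) (X : Ω → ℕ)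
    (hX : Measurable X) (N : ℕ) (pN : ℝ) (hp0 : 0 ≤ pN) (hp1 : pN ≤ 1)
    (hlaw : ∀ m : ℕ, μ {ω | X ω = m}
      = ENNReal.ofReal ((N.choose m : ℝ) * pN ^ m * (1 - pN) ^ (N - m)))
    (δ : ℝ) (hδ0 : 0 < δ) (hδ1 : δ ≤ 1) :
    μ {ω | δ * ((N:ℝ) * pN) ≤ |(X ω : ℝ) - (N:ℝ) * pN|} ≤
      ENNReal.ofReal (2 * Real.exp (-(5/16) * δ^2 * ((N:ℝ) * pN))) := by
  set M : ℝ := (N:ℝ) * pN with hM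
  have hM0 : 0 ≤ M := mul_nonneg (Nat.cast_nonneg N) hp0
  set t : ℝ := δ/2 with htdef
  have ht0 : 0 ≤ t := by positivity
  have ht1 : t ≤ 1 := by rw [htdef]; linarith
  have hq := aux_exp_quad ht0 ht1
  have hqn := aux_exp_quad_neg ht0 ht1
  have hsub : {ω | δ * M ≤ |(X ω : ℝ) - M|} ⊆
      {ω | (1+δ) * M ≤ (X ω : ℝ)} ∪ {ω | (X ω : ℝ) ≤ (1-δ) * M} := by
    intro ω hω
    simp only [Set.mem_setOf_eq] at hω
    rcases le_abs.mp hω with h | h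
    · left; simp only [Set.mem_setOf_eq]; linarith
    · right; simp only [Set.mem_setOf_eq]; linarith
  have h1 := aux_upper_tail μ X hX N pN hp0 hp1 hlaw t ((1+δ)*M) ht0
  have h2 := aux_lower_tail μ X hX N pN hp0 hp1 hlaw t ((1-δ)*M) ht0
  have hδt : δ = 2*t := by rw [htdef]; ring
  have e1 : (N:ℝ) * (pN * (Real.exp t - 1)) - t * ((1+δ)*M) ≤ -(5/16) * δ^2 * M := by
    have h : (N:ℝ) * (pN * (Real.exp t - 1)) = M * (Real.exp t - 1) := by rw [hM]; ring
    rw [h, hδt]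
    nlinarith [mul_le_mul_of_nonneg_left hq hM0]
  have e2 : (N:ℝ) * (pN * (Real.exp (-t) - 1)) + t * ((1-δ)*M) ≤ -(5/16) * δ^2 * M := by
    have h : (N:ℝ) * (pN * (Real.exp (-t) - 1)) = M * (Real.exp (-t) - 1) := by rw [hM]; ring
    rw [h, hδt]
    nlinarith [mul_le_mul_of_nonneg_left hqn hM0]
  calc μ {ω | δ * M ≤ |(X ω : ℝ) - M|}
      ≤ μ ({ω | (1+δ) * M ≤ (X ω : ℝ)} ∪ {ω | (X ω : ℝ) ≤ (1-δ) * M}) := measure_mono hsub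
    _ ≤ μ {ω | (1+δ) * M ≤ (X ω : ℝ)} + μ {ω | (X ω : ℝ) ≤ (1-δ) * M} := measure_union_le _ _
    _ ≤ ENNReal.ofReal (Real.exp (-(5/16) * δ^2 * M))
        + ENNReal.ofReal (Real.exp (-(5/16) * δ^2 * M)) := by
        refine add_le_add (h1.trans ?_) (h2.trans ?_) <;>
          exact ENNReal.ofReal_le_ofReal (Real.exp_le_exp.2 (by assumption))
    _ = ENNReal.ofReal (2 * Real.exp (-(5/16) * δ^2 * M)) := by
        rw [← ENNReal.ofReal_add (Real.exp_pos _).le (Real.exp_pos _).le]; ring_nf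

lemma aux_summable (β ε : ℝ) (hβ : 0 < β) (hε : 0 < ε) :
    Summable (fun N : ℕ => Real.exp (-(β * (N:ℝ) ^ ε))) := by
  set k : ℕ := ⌈2/ε⌉₊ + 1 with hk
  have hk2 : 2 ≤ (k:ℝ) * ε := by
    have h1 : 2/ε ≤ (k:ℝ) := by
      rw [hk]; push_cast
      exact (Nat.le_ceil _).trans (by linarith)
    calc (2:ℝ) = (2/ε) * ε := by field_simp
      _ ≤ (k:ℝ) * ε := mul_le_mul_of_nonneg_right h1 hε.le
  set C : ℝ := (k.factorial : ℝ) / β ^ k with hC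
  have hC0 : 0 ≤ C := by positivity
  rw [← summable_nat_add_iff 1]
  have hb : Summable (fun n : ℕ => C * ((n+1 : ℕ):ℝ) ^ (-(2:ℝ))) := by
    refine Summable.mul_left C ?_
    exact (summable_nat_add_iff 1).2 (Real.summable_nat_rpow.2 (by norm_num))
  refine Summable.of_nonneg_of_le (fun n => (Real.exp_pos _).le) (fun n => ?_) hb
  set m : ℝ := ((n+1 : ℕ):ℝ) with hm
  have hm1 : 1 ≤ m := by rw [hm]; exact_mod_cast Nat.succ_le_succ (Nat.zero_le n)
  have hm0 : 0 < m := lt_of_lt_of_le one_pos hm1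
  set x : ℝ := β * m ^ ε with hx
  have hx0 : 0 < x := mul_pos hβ (Real.rpow_pos_of_pos hm0 ε)
  have hpow : x ^ k / (k.factorial : ℝ) ≤ Real.exp x := by
    have h1 : x ^ k / (k.factorial : ℝ) ≤ ∑ i ∈ Finset.range (k+1), x ^ i / (i.factorial : ℝ) := by
      refine Finset.single_le_sum (f := fun i => x ^ i / (i.factorial : ℝ))
        (fun i _ => by positivity) (Finset.self_mem_range_succ k)
    exact h1.trans (Real.sum_le_exp_of_nonneg hx0.le _)
  have hxk0 : 0 < x ^ k / (k.factorial : ℝ) := by positivity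
  have h2 : Real.exp (-x) ≤ (k.factorial : ℝ) / x ^ k := by
    rw [Real.exp_neg]
    rw [inv_le_iff_one_le_mul₀ (Real.exp_pos x)]
    calc (1:ℝ) = (x^k / (k.factorial:ℝ)) * ((k.factorial:ℝ) / x^k) := by
          field_simp
      _ ≤ Real.exp x * ((k.factorial:ℝ) / x^k) :=
          mul_le_mul_of_nonneg_right hpow (by positivity)
      _ = (k.factorial:ℝ) / x^k * Real.exp x := by ring
  have hxk : x ^ k = β ^ k * m ^ (ε * k) := by
    rw [hx, mul_pow, ← Real.rpow_natCast (m ^ ε) k, ← Real.rpow_mul hm0.le]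
  have hmono : m ^ (2:ℝ) ≤ m ^ (ε * (k:ℝ)) := by
    refine Real.rpow_le_rpow_of_exponent_le hm1 (by linarith [hk2])
  have hm2 : (0:ℝ) < m ^ (2:ℝ) := Real.rpow_pos_of_pos hm0 _
  have key : (k.factorial : ℝ) / x ^ k ≤ C * m ^ (-(2:ℝ)) := by
    rw [hxk, Real.rpow_neg hm0.le]
    have h3 : (m ^ (ε * (k:ℝ)))⁻¹ ≤ (m ^ (2:ℝ))⁻¹ := inv_anti₀ hm2 hmono
    calc (k.factorial:ℝ) / (β^k * m^(ε*(k:ℝ)))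
        = C * (m^(ε*(k:ℝ)))⁻¹ := by
          rw [hC, div_mul_eq_div_div, div_eq_mul_inv]
      _ ≤ C * (m^(2:ℝ))⁻¹ := mul_le_mul_of_nonneg_left h3 hC0
  exact h2.trans key

/-- If `B_N` is Binomial(`N`, `p_N`) with `N p_N ≥ c N^ε`, then `B_N/(N p_N) → 1`
almost surely, and in particular `B_N → ∞` almost surely. -/
theorem stmt_12 {Ω : Type*} [MeasurableSpace Ω] (μ : Measure Ω) [IsProbabilityMeasure μ]
    (B : ℕ → Ω → ℕ) (hmeas : ∀ N, Measurable (B N))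
    (p : ℕ → ℝ) (hp0 : ∀ N, 0 ≤ p N) (hp1 : ∀ N, p N ≤ 1)
    (hlaw : ∀ N, 1 ≤ N → ∀ m : ℕ,
      μ {ω | B N ω = m} = ENNReal.ofReal ((N.choose m : ℝ) * p N ^ m * (1 - p N) ^ (N - m)))
    (c ε : ℝ) (hc : 0 < c) (hε : 0 < ε)
    (hgrow : ∀ N : ℕ, 1 ≤ N → (N : ℝ) * p N ≥ c * (N : ℝ) ^ ε) :
    ∀ᵐ ω ∂μ,
      Tendsto (fun N => (B N ω : ℝ) / ((N : ℝ) * p N)) atTop (nhds 1) ∧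
      Tendsto (fun N => B N ω) atTop atTop := by
  have hμpos : ∀ N : ℕ, 1 ≤ N → 0 < (N:ℝ) * p N := by
    intro N hN
    have h1 := hgrow N hN
    have h0 : (0:ℝ) < c * (N:ℝ) ^ ε :=
      mul_pos hc (Real.rpow_pos_of_pos (by exact_mod_cast hN) ε)
    linarith
  have key : ∀ δ : ℝ, 0 < δ → δ ≤ 1 → ∀ᵐ ω ∂μ, ∀ᶠ N in atTop,
      |(B N ω : ℝ) - (N:ℝ) * p N| < δ * ((N:ℝ) * p N) := by
    intro δ hδ0 hδ1
    set s : ℕ → Set Ω := fun N =>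
      {ω | 1 ≤ N ∧ δ * ((N:ℝ) * p N) ≤ |(B N ω : ℝ) - (N:ℝ) * p N|} with hs
    have hbound : ∀ N : ℕ, μ (s N) ≤
        ENNReal.ofReal (2 * Real.exp (-((5/16) * δ^2 * c * (N:ℝ) ^ ε))) := by
      intro N
      rcases Nat.eq_zero_or_pos N with h0 | h1
      · subst h0
        have he : s 0 = ∅ := by ext ω; simp [hs]
        simp [he]
      · have hsN : s N ⊆ {ω | δ * ((N:ℝ) * p N) ≤ |(B N ω : ℝ) - (N:ℝ) * p N|} :=
          fun ω h => h.2
        refine (measure_mono hsN).trans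
          ((aux_chernoff μ (B N) (hmeas N) N (p N) (hp0 N) (hp1 N) (hlaw N h1) δ hδ0 hδ1).trans
            ?_)
        refine ENNReal.ofReal_le_ofReal ?_
        have hexp : -(5/16) * δ^2 * ((N:ℝ) * p N) ≤ -((5/16) * δ^2 * c * (N:ℝ) ^ ε) := by
          nlinarith [mul_nonneg (sq_nonneg δ) (sub_nonneg.mpr (hgrow N h1))]
        exact mul_le_mul_of_nonneg_left (Real.exp_le_exp.2 hexp) (by norm_num)
    have hsum : ∑' N, μ (s N) ≠ ⊤ := by
      have hS : Summable (fun N : ℕ => 2 * Real.exp (-((5/16) * δ^2 * c * (N:ℝ) ^ ε))) := by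
        have := aux_summable ((5/16) * δ^2 * c) ε (by positivity) hε
        have h2 : (fun N : ℕ => Real.exp (-((5/16) * δ^2 * c * (N:ℝ) ^ ε)))
            = fun N : ℕ => Real.exp (-(((5/16) * δ^2 * c) * (N:ℝ) ^ ε)) := by
          funext N; ring_nf
        exact (by rw [h2]; exact this : Summable _).mul_left 2
      have hle : ∑' N, μ (s N) ≤
          ENNReal.ofReal (∑' N : ℕ, 2 * Real.exp (-((5/16) * δ^2 * c * (N:ℝ) ^ ε))) := by
        rw [ENNReal.ofReal_tsum_of_nonneg (fun n => by positivity) hS]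
        exact ENNReal.tsum_le_tsum hbound
      exact (hle.trans_lt ENNReal.ofReal_lt_top).ne
    filter_upwards [MeasureTheory.ae_eventually_notMem hsum] with ω hω
    filter_upwards [hω, eventually_ge_atTop 1] with N h1 h2
    have hns : ¬ (1 ≤ N ∧ δ * ((N:ℝ) * p N) ≤ |(B N ω : ℝ) - (N:ℝ) * p N|) := h1
    exact not_le.1 fun hcon => hns ⟨h2, hcon⟩
  have main : ∀ᵐ ω ∂μ, ∀ j : ℕ, ∀ᶠ N in atTop,
      |(B N ω : ℝ) - (N:ℝ) * p N| < (1/((j:ℝ)+1)) * ((N:ℝ) * p N) := by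
    rw [ae_all_iff]
    intro j
    refine key _ (by positivity) ?_
    rw [div_le_one (by positivity)]
    linarith [Nat.cast_nonneg (α := ℝ) j]
  filter_upwards [main] with ω hω
  have part2 : Tendsto (fun N => B N ω) atTop atTop := by
    rw [← tendsto_natCast_atTop_iff (R := ℝ)]
    have hf : Tendsto (fun N : ℕ => (c/2) * (N:ℝ) ^ ε) atTop atTop :=
      Tendsto.const_mul_atTop (by linarith)
        ((tendsto_rpow_atTop hε).comp tendsto_natCast_atTop_atTop)
    refine tendsto_atTop_mono' atTop ?_ hf
    filter_upwards [hω 1, eventually_ge_atTop 1] with N hN h1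
    have hg := hgrow N h1
    have hM := hμpos N h1
    have habs := abs_lt.1 hN
    have h12 : (1/(((1:ℕ):ℝ)+1)) = (1/2 : ℝ) := by norm_num
    rw [h12] at habs
    have hBN : ((N:ℝ) * p N)/2 ≤ (B N ω : ℝ) := by linarith [habs.1]
    calc (c/2) * (N:ℝ) ^ ε ≤ ((N:ℝ) * p N)/2 := by linarith
      _ ≤ (B N ω : ℝ) := hBN
  refine ⟨?_, part2⟩
  rw [Metric.tendsto_atTop]
  intro r hr
  obtain ⟨j, hj⟩ := exists_nat_one_div_lt hr
  obtain ⟨N₀, hN₀⟩ := eventually_atTop.1 (hω j)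
  refine ⟨max N₀ 1, fun n hn => ?_⟩
  have hn₀ : N₀ ≤ n := le_trans (le_max_left _ _) hn
  have hn1 : 1 ≤ n := le_trans (le_max_right _ _) hn
  have hM := hμpos n hn1
  have hb := hN₀ n hn₀
  rw [Real.dist_eq]
  have heq : (B n ω : ℝ)/((n:ℝ) * p n) - 1 = ((B n ω : ℝ) - (n:ℝ) * p n)/((n:ℝ) * p n) := by
    rw [sub_div, div_self hM.ne']
  rw [heq, abs_div, abs_of_pos hM, div_lt_iff₀ hM]
  exact hb.trans (mul_lt_mul_of_pos_right hj hM)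
end

section
/- Adding a training point to a Gaussian process does not increase the posterior variance at any test point: for a positive semidefinite kernel k, noise variance σ_n² > 0, and training inputs x^{(1)},…,x^{(N+1)}, the posterior variance σ_{N+1}²(x) computed with all N+1 points satisfies σ_{N+1}²(x) ≤ σ_N²(x), where σ_N²(x) is computed using only the first N points. -/
open Matrix

lemma smul_one_posDef {n : Type*} [Fintype n] [DecidableEq n] {c : ℝ} (hc : 0 < c) :
    (c • (1 : Matrix n n ℝ)).PosDef := by
  have h1 : (1 : Matrix n n ℝ).PosDef := Matrix.PosDef.one
  refine Matrix.PosDef.of_dotProduct_mulVec_pos ?_ fun x hx => ?_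
  · unfold Matrix.IsHermitian
    ext i j
    simp [Matrix.one_apply, eq_comm]
  · rw [Matrix.smul_mulVec, dotProduct_smul, smul_eq_mul]
    exact mul_pos hc (h1.dotProduct_mulVec_pos hx)

/-- Variational characterization bound: for a positive definite real matrix `A`,
`2 ⟨w, v⟩ - ⟨w, A w⟩ ≤ ⟨v, A⁻¹ v⟩`. -/
lemma quad_lb {n : Type*} [Fintype n] [DecidableEq n] {A : Matrix n n ℝ}
    (hA : A.PosDef) (v w : n → ℝ) :
    2 * (w ⬝ᵥ v) - w ⬝ᵥ A.mulVec w ≤ v ⬝ᵥ A⁻¹.mulVec v := by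
  have hdet : IsUnit A.det := isUnit_iff_ne_zero.mpr hA.det_pos.ne'
  have hAinv : A * A⁻¹ = 1 := Matrix.mul_nonsing_inv A hdet
  have hAsymm : Aᵀ = A := hA.isHermitian
  set u : n → ℝ := A⁻¹.mulVec v with hu
  have hAu : A.mulVec u = v := by
    rw [hu, Matrix.mulVec_mulVec, hAinv, Matrix.one_mulVec]
  have h0 : 0 ≤ (w - u) ⬝ᵥ A.mulVec (w - u) := by
    have := hA.posSemidef.dotProduct_mulVec_nonneg (w - u); rwa [star_trivial] at this
  have hexp : (w - u) ⬝ᵥ A.mulVec (w - u)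
      = w ⬝ᵥ A.mulVec w - 2 * (w ⬝ᵥ v) + v ⬝ᵥ A⁻¹.mulVec v := by
    have h1 : u ⬝ᵥ A.mulVec w = w ⬝ᵥ v := by
      rw [Matrix.dotProduct_mulVec, ← Matrix.mulVec_transpose, hAsymm, hAu,
        dotProduct_comm]
    have h2 : w ⬝ᵥ A.mulVec u = w ⬝ᵥ v := by rw [hAu]
    have h3 : u ⬝ᵥ A.mulVec u = v ⬝ᵥ A⁻¹.mulVec v := by
      rw [hAu]; rw [hu, dotProduct_comm]
    rw [Matrix.mulVec_sub, sub_dotProduct, dotProduct_sub, dotProduct_sub, h1, h2, h3]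
    ring
  linarith [h0, hexp ▸ h0]

/-- Adding a training point never increases the Gaussian process posterior variance:
with a symmetric positive semidefinite kernel `k` and noise variance `σn2 > 0`, the
posterior variance using all `N+1` training inputs is at most the one using the
first `N` inputs. -/
theorem stmt_16 {α : Type*} (k : α → α → ℝ) (hsym : ∀ a b, k a b = k b a)
    (hpsd : ∀ (n : ℕ) (z : Fin n → α),
      (Matrix.of fun i j : Fin n => k (z i) (z j)).PosSemidef)
    (σn2 : ℝ) (hσ : 0 < σn2) (N : ℕ) (x : Fin (N + 1) → α) (t : α) :
    k t t - (fun i : Fin (N + 1) => k t (x i)) ⬝ᵥ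
        ((Matrix.of fun i j : Fin (N + 1) => k (x i) (x j))
            + σn2 • (1 : Matrix (Fin (N + 1)) (Fin (N + 1)) ℝ))⁻¹.mulVec
          (fun i : Fin (N + 1) => k t (x i))
      ≤ k t t - (fun i : Fin N => k t (x i.castSucc)) ⬝ᵥ
          ((Matrix.of fun i j : Fin N => k (x i.castSucc) (x j.castSucc))
              + σn2 • (1 : Matrix (Fin N) (Fin N) ℝ))⁻¹.mulVec
            (fun i : Fin N => k t (x i.castSucc)) := by
  set A : Matrix (Fin (N + 1)) (Fin (N + 1)) ℝ :=
    (Matrix.of fun i j : Fin (N + 1) => k (x i) (x j))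
      + σn2 • (1 : Matrix (Fin (N + 1)) (Fin (N + 1)) ℝ) with hAdef
  set B : Matrix (Fin N) (Fin N) ℝ :=
    (Matrix.of fun i j : Fin N => k (x i.castSucc) (x j.castSucc))
      + σn2 • (1 : Matrix (Fin N) (Fin N) ℝ) with hBdef
  set v : Fin (N + 1) → ℝ := fun i => k t (x i) with hvdef
  set uu : Fin N → ℝ := fun i => k t (x i.castSucc) with huudef
  have hApd : A.PosDef := Matrix.PosDef.posSemidef_add (hpsd (N + 1) x) (smul_one_posDef hσ)
  have hBpd : B.PosDef :=
    Matrix.PosDef.posSemidef_add (hpsd N (fun i => x i.castSucc)) (smul_one_posDef hσ)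
  -- suffices to show the quadratic forms are comparable
  suffices h : uu ⬝ᵥ B⁻¹.mulVec uu ≤ v ⬝ᵥ A⁻¹.mulVec v by
    exact sub_le_sub_left h _
  -- the witness vector
  set c : Fin N → ℝ := B⁻¹.mulVec uu with hcdef
  set w : Fin (N + 1) → ℝ := Fin.snoc c 0 with hwdef
  have hBdet : IsUnit B.det := isUnit_iff_ne_zero.mpr hBpd.det_pos.ne'
  have hBc : B.mulVec c = uu := by
    rw [hcdef, Matrix.mulVec_mulVec, Matrix.mul_nonsing_inv B hBdet, Matrix.one_mulVec]
  have hwv : w ⬝ᵥ v = c ⬝ᵥ uu := by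
    rw [dotProduct, Fin.sum_univ_castSucc]
    simp [hwdef, dotProduct]
    rfl
  have hAconsist : ∀ i j : Fin N, A i.castSucc j.castSucc = B i j := by
    intro i j
    simp [hAdef, hBdef, Matrix.one_apply, Fin.castSucc_inj]
  have hwAw : w ⬝ᵥ A.mulVec w = c ⬝ᵥ uu := by
    have hmv : ∀ i : Fin (N + 1), A.mulVec w i = ∑ j : Fin N, A i j.castSucc * c j := by
      intro i
      rw [Matrix.mulVec, dotProduct, Fin.sum_univ_castSucc]
      simp [hwdef]
    rw [dotProduct, Fin.sum_univ_castSucc]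
    simp only [hwdef, Fin.snoc_last, Fin.snoc_castSucc, zero_mul, add_zero]
    calc ∑ i : Fin N, c i * A.mulVec w i.castSucc
        = ∑ i : Fin N, c i * ∑ j : Fin N, B i j * c j := by
          refine Finset.sum_congr rfl fun i _ => ?_
          rw [hmv]
          congr 1
          exact Finset.sum_congr rfl fun j _ => by rw [hAconsist]
      _ = c ⬝ᵥ B.mulVec c := by
          simp [dotProduct, Matrix.mulVec]
      _ = c ⬝ᵥ uu := by rw [hBc]
  have key := quad_lb hApd v w
  rw [hwv, hwAw] at key
  have hfinal : uu ⬝ᵥ B⁻¹.mulVec uu = c ⬝ᵥ uu := by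
    rw [hcdef, dotProduct_comm]
  linarith
end
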